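/- The binomial coefficient C(n,k) with 0 ≤ k ≤ n is a power of 2 if and only if k = 0, or k = n, or there exists m such that n = 2^m and k = 1, or there exists m such that n = 2^m and k = 2^m - 1. -/

import Mathlib

lemma choose_mono_half {n a b : ℕ} (hab : a ≤ b) (hb : b ≤ n / 2) :
    n.choose a ≤ n.choose b := by
  induction hab using Nat.decreasingInduction with
  | self => rfl
  | of_succ j hj ih =>
    exact (Nat.choose_le_succ_of_lt_half_left (lt_of_lt_of_le hj hb)).trans ih

theorem binom_pow_two_iff (n k : ℕ) (hk : k ≤ n) :
    (∃ m : ℕ, n.choose k = 2 ^ m) ↔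
      k = 0 ∨ k = n ∨ (∃ m : ℕ, n = 2 ^ m ∧ k = 1) ∨
        (∃ m : ℕ, n = 2 ^ m ∧ k = 2 ^ m - 1) := by
  constructor
  · rintro ⟨m, hm⟩
    rcases eq_or_ne k 0 with rfl | hk0
    · exact Or.inl rfl
    rcases eq_or_ne k n with rfl | hkn
    · exact Or.inr (Or.inl rfl)
    rcases eq_or_ne k 1 with rfl | hk1
    · refine Or.inr (Or.inr (Or.inl ⟨m, ?_, rfl⟩))
      rwa [Nat.choose_one_right] at hm
    rcases eq_or_ne k (n - 1) with rfl | hkn1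
    · refine Or.inr (Or.inr (Or.inr ⟨m, ?_, ?_⟩))
      · rwa [show n - 1 = n - 1 from rfl, Nat.choose_symm (by omega : 1 ≤ n),
          Nat.choose_one_right] at hm
      · rw [Nat.choose_symm (by omega : 1 ≤ n), Nat.choose_one_right] at hm
        omega
    -- now 2 ≤ k ≤ n - 2, derive contradiction
    exfalso
    have hk2 : 2 ≤ k := by omega
    have hkn2 : k ≤ n - 2 := by omega
    have hn4 : 4 ≤ n := by omega
    have hlow : n.choose 2 ≤ n.choose k := by
      rcases le_or_gt k (n / 2) with h | h
      · exact choose_mono_half hk2 h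
      · rw [← Nat.choose_symm hk]
        exact choose_mono_half (by omega) (by omega)
    have hle : n.choose k ≤ n := by
      have := Nat.pow_factorization_choose_le (p := 2) (n := n) (k := k) (by omega)
      rwa [hm, Nat.Prime.factorization_pow Nat.prime_two, Finsupp.single_eq_same,
        ← hm] at this
    have h2 : n.choose 2 = n * (n - 1) / 2 := Nat.choose_two_right n
    have hev : 2 ∣ n * (n - 1) := by
      rcases Nat.even_or_odd n with he | ho
      · exact Dvd.dvd.mul_right he.two_dvd _
      · exact Dvd.dvd.mul_left (Nat.Odd.sub_odd ho odd_one).two_dvd _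
    have : n < n * (n - 1) / 2 := by
      rw [Nat.lt_div_iff_mul_lt (by norm_num)]
      have h3 : n * 3 ≤ n * (n - 1) := Nat.mul_le_mul_left n (by omega)
      omega
    omega
  · rintro (rfl | rfl | ⟨m, rfl, rfl⟩ | ⟨m, rfl, rfl⟩)
    · exact ⟨0, by simp⟩
    · exact ⟨0, by simp⟩
    · exact ⟨m, by simp⟩
    · refine ⟨m, ?_⟩
      rw [Nat.choose_symm (Nat.one_le_two_pow : 1 ≤ 2 ^ m), Nat.choose_one_right]
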